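/- The set U(n) = {u^1,…,u^{n-1}} of vertex labels of T_n is an orthogonal set of nonzero vectors in ℝ^n: for i ≠ j, u^i · u^j = 0. -/

import Mathlib

open Finset


open Finset

/-- The vector `w(n)` (as a function of the index `i`): for odd `n`,
`w(n)_i = (n-1)/2` for even `i` and `-(n+1)/2` for odd `i` (as in Table 1 of the paper); `w(2) = (1,-1)`;
`w(4) = (1,-1,-1,1)`; for even `n = 2m > 4`, `w(n)_i = w(m)_{i mod m}`. -/
def w (n i : ℕ) : ℤ :=
  if h2 : n < 2 then 0
  else if n = 2 then (if i = 0 then 1 else -1)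
  else if n = 4 then (if i = 0 ∨ i = 3 then 1 else -1)
  else if n % 2 = 1 then (if i % 2 = 0 then ((n : ℤ) - 1) / 2 else -(((n : ℤ) + 1) / 2))
  else w (n / 2) (i % (n / 2))
termination_by n
decreasing_by omega

/-- Indices where `u` is positive. -/
def posIdx {n : ℕ} (u : Fin n → ℤ) : Finset (Fin n) :=
  Finset.univ.filter (fun i => 0 < u i)

/-- Indices where `u` is negative. -/
def negIdx {n : ℕ} (u : Fin n → ℤ) : Finset (Fin n) :=
  Finset.univ.filter (fun i => u i < 0)

/-- The left child of a vertex labeled `u`: supported on the positive support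
of `u`, with the `r`-th (in increasing index order) nonzero entry equal to
`w(a')_r` where `a'` is the size of the positive support. -/
def leftChild {n : ℕ} (u : Fin n → ℤ) : Fin n → ℤ := fun i =>
  if 0 < u i then w (posIdx u).card ((posIdx u).filter (fun j => j < i)).card else 0

/-- The right child of a vertex labeled `u`: supported on the negative support
of `u`, with the `r`-th nonzero entry equal to `w(a'')_r` where `a''` is the
size of the negative support. -/
def rightChild {n : ℕ} (u : Fin n → ℤ) : Fin n → ℤ := fun i =>
  if u i < 0 then w (negIdx u).card ((negIdx u).filter (fun j => j < i)).card else 0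

/-- Rooted binary trees with vertex labels in `α`. -/
inductive BT (α : Type) : Type where
  | node (label : α) (l r : Option (BT α)) : BT α

/-- Build the labeled tree below the vertex labeled `u` (with enough fuel this
is the tree described in the paper: a left child exists iff the positive
support has size at least `2`, a right child iff the negative support does). -/
def build (n : ℕ) : ℕ → (Fin n → ℤ) → BT (Fin n → ℤ)
  | 0, u => .node u none none
  | f + 1, u =>
    .node u
      (if 2 ≤ (posIdx u).card then some (build n f (leftChild u)) else none)
      (if 2 ≤ (negIdx u).card then some (build n f (rightChild u)) else none)

/-- The tree `T_n`, rooted at `w(n)`. (Fuel `n` suffices since the number of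
nonzero entries strictly decreases from parent to child.) -/
def T (n : ℕ) : BT (Fin n → ℤ) := build n n (fun i => w n i)

/-- The list of vertex labels of a tree in depth-first (preorder) order. -/
def labels {α : Type} : BT α → List α
  | .node a none none => [a]
  | .node a (some l) none => a :: labels l
  | .node a none (some r) => a :: labels r
  | .node a (some l) (some r) => a :: (labels l ++ labels r)

/-- A vertex label is skew-symmetric if its nonzero entries form the vector
`w(2) = (1,-1)`. -/
def IsSkew {n : ℕ} (u : Fin n → ℤ) : Prop :=
  ∃ i j : Fin n, i < j ∧ u i = 1 ∧ u j = -1 ∧ ∀ k, k ≠ i → k ≠ j → u k = 0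

instance {n : ℕ} (u : Fin n → ℤ) : Decidable (IsSkew u) := by
  unfold IsSkew; infer_instance

section Aux

lemma w_odd (n i : ℕ) (hn : 3 ≤ n) (h : n % 2 = 1) :
    w n i = if i % 2 = 0 then ((n : ℤ) - 1) / 2 else -(((n : ℤ) + 1) / 2) := by
  rw [w]
  have h1 : ¬ n < 2 := by omega
  have h2 : n ≠ 2 := by omega
  have h4 : n ≠ 4 := by omega
  simp [h1, h2, h4, h]

lemma w_even (n i : ℕ) (hn : 2 ≤ n) (h : n % 2 = 0) (h2 : n ≠ 2) (h4 : n ≠ 4) :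
    w n i = w (n/2) (i % (n/2)) := by
  rw [w]
  have h1 : ¬ n < 2 := by omega
  have h5 : ¬ n % 2 = 1 := by omega
  simp [h1, h2, h4, h5]

lemma sum_alt (a b : ℤ) (n : ℕ) :
    ∑ i ∈ Finset.range n, (if i % 2 = 0 then a else b)
      = (((n+1)/2 : ℕ) : ℤ) * a + ((n/2 : ℕ) : ℤ) * b := by
  induction n with
  | zero => simp
  | succ n ih =>
    rw [Finset.sum_range_succ, ih]
    rcases Nat.mod_two_eq_zero_or_one n with h | h
    · rw [if_pos h]
      have e1 : (n+1+1)/2 = (n+1)/2 + 1 := by omega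
      have e2 : (n+1)/2 = n/2 := by omega
      rw [e1, e2]
      push_cast; ring
    · rw [if_neg (by omega)]
      have e1 : (n+1+1)/2 = (n+1)/2 := by omega
      have e2 : (n+1)/2 = n/2 + 1 := by omega
      rw [e1, e2]
      push_cast; ring

lemma wkey : ∀ n, 2 ≤ n →
    (0 < w n 0) ∧
    (∀ i, i < n → w n i ≠ 0) ∧
    (∀ i j, i < n → j < n → 0 < w n i → 0 < w n j → w n i = w n j) ∧
    (∀ i j, i < n → j < n → w n i < 0 → w n j < 0 → w n i = w n j) ∧
    (∑ i ∈ Finset.range n, w n i = 0) := by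
  intro n
  induction n using Nat.strong_induction_on with
  | _ n ih =>
    intro hn
    by_cases h2 : n = 2
    · subst h2
      have h0 : w 2 0 = 1 := by rw [w]; norm_num
      have h1 : w 2 1 = -1 := by rw [w]; norm_num
      refine ⟨by rw [h0]; norm_num, ?_, ?_, ?_, ?_⟩
      · intro i hi; interval_cases i <;> simp [h0, h1]
      · intro i j hi hj; interval_cases i <;> interval_cases j <;> simp [h0, h1] <;> omega
      · intro i j hi hj; interval_cases i <;> interval_cases j <;> simp [h0, h1] <;> omega
      · rw [Finset.sum_range_succ, Finset.sum_range_one, h0, h1]; ring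
    · by_cases h4 : n = 4
      · subst h4
        have e0 : w 4 0 = 1 := by rw [w]; norm_num
        have e1 : w 4 1 = -1 := by rw [w]; norm_num
        have e2 : w 4 2 = -1 := by rw [w]; norm_num
        have e3 : w 4 3 = 1 := by rw [w]; norm_num
        refine ⟨by rw [e0]; norm_num, ?_, ?_, ?_, ?_⟩
        · intro i hi; interval_cases i <;> simp [e0, e1, e2, e3]
        · intro i j hi hj; interval_cases i <;> interval_cases j <;> simp [e0, e1, e2, e3] <;> omega
        · intro i j hi hj; interval_cases i <;> interval_cases j <;> simp [e0, e1, e2, e3] <;> omega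
        · simp [Finset.sum_range_succ, e0, e1, e2, e3]
      · by_cases hodd : n % 2 = 1
        · have hn3 : 3 ≤ n := by omega
          have hw : ∀ i, w n i = if i % 2 = 0 then ((n : ℤ) - 1) / 2 else -(((n : ℤ) + 1) / 2) :=
            fun i => w_odd n i hn3 hodd
          have ha : (1:ℤ) ≤ ((n:ℤ) - 1) / 2 := by omega
          have hb : (1:ℤ) ≤ ((n:ℤ) + 1) / 2 := by omega
          refine ⟨?_, ?_, ?_, ?_, ?_⟩
          · rw [hw 0]; norm_num; omega
          · intro i _; rw [hw i]; split <;> omega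
          · intro i j _ _ hpi hpj
            rw [hw i] at hpi ⊢; rw [hw j] at hpj ⊢
            by_cases ei : i % 2 = 0 <;> by_cases ej : j % 2 = 0 <;>
              simp only [ei, ej, if_pos, if_neg, if_true, if_false] <;>
              simp_all <;> omega
          · intro i j _ _ hpi hpj
            rw [hw i] at hpi ⊢; rw [hw j] at hpj ⊢
            by_cases ei : i % 2 = 0 <;> by_cases ej : j % 2 = 0 <;>
              simp only [ei, ej, if_pos, if_neg, if_true, if_false] <;>
              simp_all <;> omega
          · have : ∑ i ∈ Finset.range n, w n i
                = ∑ i ∈ Finset.range n, (if i % 2 = 0 then ((n : ℤ) - 1) / 2 else -(((n : ℤ) + 1) / 2)) :=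
              Finset.sum_congr rfl (fun i _ => hw i)
            rw [this, sum_alt]
            obtain ⟨k, rfl⟩ : ∃ k, n = 2*k+1 := ⟨n/2, by omega⟩
            have e1 : (2*k+1+1)/2 = k+1 := by omega
            have e2 : (2*k+1)/2 = k := by omega
            have e3 : (((2*k+1 : ℕ) : ℤ) - 1) / 2 = k := by push_cast; omega
            have e4 : (((2*k+1 : ℕ) : ℤ) + 1) / 2 = k+1 := by push_cast; omega
            rw [e1, e2, e3, e4]
            push_cast; ring
        · -- even case, n ≥ 6
          have heven : n % 2 = 0 := by omega
          have hn6 : 6 ≤ n := by omega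
          set m := n / 2 with hm
          have hm2 : 2 ≤ m := by omega
          have hmn : m < n := by omega
          obtain ⟨p0, pnz, ppos, pneg, psum⟩ := ih m hmn hm2
          have hw : ∀ i, w n i = w m (i % m) := fun i => w_even n i hn heven h2 h4
          have hmpos : 0 < m := by omega
          refine ⟨?_, ?_, ?_, ?_, ?_⟩
          · rw [hw 0, Nat.zero_mod]; exact p0
          · intro i _; rw [hw i]; exact pnz _ (Nat.mod_lt _ hmpos)
          · intro i j _ _ hpi hpj
            rw [hw i] at hpi ⊢; rw [hw j] at hpj ⊢
            exact ppos _ _ (Nat.mod_lt _ hmpos) (Nat.mod_lt _ hmpos) hpi hpj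
          · intro i j _ _ hpi hpj
            rw [hw i] at hpi ⊢; rw [hw j] at hpj ⊢
            exact pneg _ _ (Nat.mod_lt _ hmpos) (Nat.mod_lt _ hmpos) hpi hpj
          · have hnm : n = m + m := by omega
            have step1 : ∑ i ∈ Finset.range n, w n i = ∑ i ∈ Finset.range (m+m), w m (i % m) := by
              rw [← hnm]; exact Finset.sum_congr rfl (fun i _ => hw i)
            rw [step1, Finset.sum_range_add]
            have c1 : ∑ i ∈ Finset.range m, w m (i % m) = ∑ i ∈ Finset.range m, w m i :=
              Finset.sum_congr rfl (fun i hi => by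
                rw [Nat.mod_eq_of_lt (Finset.mem_range.mp hi)])
            have c2 : ∑ i ∈ Finset.range m, w m ((m + i) % m) = ∑ i ∈ Finset.range m, w m i :=
              Finset.sum_congr rfl (fun i hi => by
                rw [Nat.add_mod_left, Nat.mod_eq_of_lt (Finset.mem_range.mp hi)])
            rw [c1, c2, psum]; ring

end Aux

section TreeAux

variable {n : ℕ}

/-- The rank of `i` within `s`. -/
def rk (s : Finset (Fin n)) (i : Fin n) : ℕ := (s.filter (fun j => j < i)).card

lemma rk_lt {s : Finset (Fin n)} {i : Fin n} (hi : i ∈ s) : rk s i < s.card := by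
  apply Finset.card_lt_card
  rw [Finset.ssubset_iff_of_subset (Finset.filter_subset _ _)]
  exact ⟨i, hi, by simp⟩

lemma rk_mono {s : Finset (Fin n)} {i j : Fin n} (hi : i ∈ s) (hij : i < j) :
    rk s i < rk s j := by
  apply Finset.card_lt_card
  rw [Finset.ssubset_iff_of_subset
    (Finset.monotone_filter_right _ (fun x _ hx => lt_trans hx hij))]
  exact ⟨i, by simp [hi, hij], by simp⟩

lemma rk_injOn {s : Finset (Fin n)} {i j : Fin n} (hi : i ∈ s) (hj : j ∈ s)
    (h : rk s i = rk s j) : i = j := by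
  rcases lt_trichotomy i j with hc | hc | hc
  · exact absurd h (Nat.ne_of_lt (rk_mono hi hc))
  · exact hc
  · exact absurd h.symm (Nat.ne_of_lt (rk_mono hj hc))

lemma rk_image (s : Finset (Fin n)) : s.image (rk s) = Finset.range s.card := by
  apply Finset.eq_of_subset_of_card_le
  · intro t ht
    rw [Finset.mem_image] at ht
    obtain ⟨i, hi, rfl⟩ := ht
    exact Finset.mem_range.mpr (rk_lt hi)
  · rw [Finset.card_range, Finset.card_image_of_injOn (fun i hi j hj => rk_injOn hi hj)]

lemma sum_rk (s : Finset (Fin n)) (g : ℕ → ℤ) :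
    ∑ i ∈ s, g (rk s i) = ∑ t ∈ Finset.range s.card, g t := by
  rw [← rk_image, Finset.sum_image (fun i hi j hj => rk_injOn hi hj)]

/-- The key properties of vertex labels. -/
structure Good (u : Fin n → ℤ) : Prop where
  ne : u ≠ 0
  pos : ∀ i j, 0 < u i → 0 < u j → u i = u j
  neg : ∀ i j, u i < 0 → u j < 0 → u i = u j
  sum : ∑ k : Fin n, u k = 0

lemma mem_posIdx {u : Fin n → ℤ} {i : Fin n} : i ∈ posIdx u ↔ 0 < u i := by
  simp [posIdx]

lemma mem_negIdx {u : Fin n → ℤ} {i : Fin n} : i ∈ negIdx u ↔ u i < 0 := by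
  simp [negIdx]

lemma leftChild_eq (u : Fin n → ℤ) (i : Fin n) :
    leftChild u i = if 0 < u i then w (posIdx u).card (rk (posIdx u) i) else 0 := rfl

lemma rightChild_eq (u : Fin n → ℤ) (i : Fin n) :
    rightChild u i = if u i < 0 then w (negIdx u).card (rk (negIdx u) i) else 0 := rfl

lemma left_supp {u : Fin n → ℤ} {i : Fin n} (h : leftChild u i ≠ 0) : 0 < u i := by
  by_contra hc
  exact h (by rw [leftChild_eq, if_neg hc])

lemma right_supp {u : Fin n → ℤ} {i : Fin n} (h : rightChild u i ≠ 0) : u i < 0 := by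
  by_contra hc
  exact h (by rw [rightChild_eq, if_neg hc])

lemma good_left {u : Fin n → ℤ} (hL : 2 ≤ (posIdx u).card) : Good (leftChild u) := by
  obtain ⟨h0, hnz, hpos, hneg, hsum⟩ := wkey (posIdx u).card hL
  have hne : (posIdx u).Nonempty := Finset.card_pos.mp (by omega)
  refine ⟨?_, ?_, ?_, ?_⟩
  · obtain ⟨i, hi⟩ := hne
    intro hcon
    have hv : leftChild u i = 0 := congrFun hcon i
    rw [leftChild_eq, if_pos (mem_posIdx.mp hi)] at hv
    exact hnz _ (rk_lt hi) hv
  · intro i j h1 h2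
    rw [leftChild_eq] at h1 ⊢; rw [leftChild_eq u j] at h2 ⊢
    by_cases e1 : 0 < u i
    · by_cases e2 : 0 < u j
      · rw [if_pos e1] at h1 ⊢; rw [if_pos e2] at h2 ⊢
        exact hpos _ _ (rk_lt (mem_posIdx.mpr e1)) (rk_lt (mem_posIdx.mpr e2)) h1 h2
      · rw [if_neg e2] at h2; exact absurd h2 (lt_irrefl 0)
    · rw [if_neg e1] at h1; exact absurd h1 (lt_irrefl 0)
  · intro i j h1 h2
    rw [leftChild_eq] at h1 ⊢; rw [leftChild_eq u j] at h2 ⊢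
    by_cases e1 : 0 < u i
    · by_cases e2 : 0 < u j
      · rw [if_pos e1] at h1 ⊢; rw [if_pos e2] at h2 ⊢
        exact hneg _ _ (rk_lt (mem_posIdx.mpr e1)) (rk_lt (mem_posIdx.mpr e2)) h1 h2
      · rw [if_neg e2] at h2; exact absurd h2 (lt_irrefl 0)
    · rw [if_neg e1] at h1; exact absurd h1 (lt_irrefl 0)
  · have hstep : ∑ k : Fin n, leftChild u k
        = ∑ k ∈ posIdx u, w (posIdx u).card (rk (posIdx u) k) := by
      rw [posIdx, Finset.sum_filter]
      exact Finset.sum_congr rfl (fun k _ => leftChild_eq u k)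
    rw [hstep, sum_rk, hsum]

lemma good_right {u : Fin n → ℤ} (hR : 2 ≤ (negIdx u).card) : Good (rightChild u) := by
  obtain ⟨h0, hnz, hpos, hneg, hsum⟩ := wkey (negIdx u).card hR
  have hne : (negIdx u).Nonempty := Finset.card_pos.mp (by omega)
  refine ⟨?_, ?_, ?_, ?_⟩
  · obtain ⟨i, hi⟩ := hne
    intro hcon
    have hv : rightChild u i = 0 := congrFun hcon i
    rw [rightChild_eq, if_pos (mem_negIdx.mp hi)] at hv
    exact hnz _ (rk_lt hi) hv
  · intro i j h1 h2
    rw [rightChild_eq] at h1 ⊢; rw [rightChild_eq u j] at h2 ⊢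
    by_cases e1 : u i < 0
    · by_cases e2 : u j < 0
      · rw [if_pos e1] at h1 ⊢; rw [if_pos e2] at h2 ⊢
        exact hpos _ _ (rk_lt (mem_negIdx.mpr e1)) (rk_lt (mem_negIdx.mpr e2)) h1 h2
      · rw [if_neg e2] at h2; exact absurd h2 (lt_irrefl 0)
    · rw [if_neg e1] at h1; exact absurd h1 (lt_irrefl 0)
  · intro i j h1 h2
    rw [rightChild_eq] at h1 ⊢; rw [rightChild_eq u j] at h2 ⊢
    by_cases e1 : u i < 0
    · by_cases e2 : u j < 0
      · rw [if_pos e1] at h1 ⊢; rw [if_pos e2] at h2 ⊢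
        exact hneg _ _ (rk_lt (mem_negIdx.mpr e1)) (rk_lt (mem_negIdx.mpr e2)) h1 h2
      · rw [if_neg e2] at h2; exact absurd h2 (lt_irrefl 0)
    · rw [if_neg e1] at h1; exact absurd h1 (lt_irrefl 0)
  · have hstep : ∑ k : Fin n, rightChild u k
        = ∑ k ∈ negIdx u, w (negIdx u).card (rk (negIdx u) k) := by
      rw [negIdx, Finset.sum_filter]
      exact Finset.sum_congr rfl (fun k _ => rightChild_eq u k)
    rw [hstep, sum_rk, hsum]

lemma dot_zero_const (u v : Fin n → ℤ)
    (hconst : ∀ i j, v i ≠ 0 → v j ≠ 0 → u i = u j)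
    (hs : ∑ k : Fin n, v k = 0) : ∑ k : Fin n, u k * v k = 0 := by
  by_cases hz : ∀ i, v i = 0
  · exact Finset.sum_eq_zero (fun k _ => by rw [hz k, mul_zero])
  · push_neg at hz
    obtain ⟨i0, hi0⟩ := hz
    have key : ∀ k : Fin n, u k * v k = u i0 * v k := by
      intro k
      by_cases hk : v k = 0
      · rw [hk, mul_zero, mul_zero]
      · rw [hconst k i0 hk hi0]
    calc ∑ k : Fin n, u k * v k = ∑ k : Fin n, u i0 * v k :=
          Finset.sum_congr rfl (fun k _ => key k)
      _ = u i0 * ∑ k : Fin n, v k := by rw [Finset.mul_sum]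
      _ = 0 := by rw [hs, mul_zero]

lemma dot_zero_disj (u v : Fin n → ℤ) (h : ∀ k, u k ≠ 0 → v k = 0) :
    ∑ k : Fin n, u k * v k = 0 := by
  apply Finset.sum_eq_zero
  intro k _
  by_cases hk : u k = 0
  · rw [hk, zero_mul]
  · rw [h k hk, mul_zero]

end TreeAux

section Main

variable {n : ℕ}

lemma build_good (n : ℕ) : ∀ (f : ℕ) (u : Fin n → ℤ), Good u →
    (∀ v ∈ labels (build n f u), Good v ∧ ∀ i, v i ≠ 0 → u i ≠ 0) ∧
    List.Pairwise (fun a b => ∑ k : Fin n, a k * b k = 0) (labels (build n f u)) := by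
  intro f
  induction f with
  | zero =>
    intro u hu
    constructor
    · intro v hv
      simp only [build, labels, List.mem_singleton] at hv
      subst hv
      exact ⟨hu, fun i h => h⟩
    · simp [build, labels]
  | succ f ih =>
    intro u hu
    -- helper facts in each case
    by_cases hL : 2 ≤ (posIdx u).card <;> by_cases hR : 2 ≤ (negIdx u).card
    · -- both children
      have hlab : labels (build n (f+1) u)
          = u :: (labels (build n f (leftChild u)) ++ labels (build n f (rightChild u))) := by
        simp only [build, if_pos hL, if_pos hR, labels]
      obtain ⟨memL, pwL⟩ := ih (leftChild u) (good_left hL)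
      obtain ⟨memR, pwR⟩ := ih (rightChild u) (good_right hR)
      constructor
      · intro v hv
        rw [hlab] at hv
        simp only [List.mem_cons, List.mem_append] at hv
        rcases hv with rfl | hv | hv
        · exact ⟨hu, fun i h => h⟩
        · obtain ⟨Gv, hs⟩ := memL v hv
          exact ⟨Gv, fun i h => (left_supp (hs i h)).ne'⟩
        · obtain ⟨Gv, hs⟩ := memR v hv
          exact ⟨Gv, fun i h => (right_supp (hs i h)).ne⟩
      · rw [hlab, List.pairwise_cons]
        constructor
        · intro v hv
          rw [List.mem_append] at hv
          rcases hv with hv | hv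
          · obtain ⟨Gv, hs⟩ := memL v hv
            exact dot_zero_const u v
              (fun i j hi hj => hu.pos i j (left_supp (hs i hi)) (left_supp (hs j hj))) Gv.sum
          · obtain ⟨Gv, hs⟩ := memR v hv
            exact dot_zero_const u v
              (fun i j hi hj => hu.neg i j (right_supp (hs i hi)) (right_supp (hs j hj))) Gv.sum
        · rw [List.pairwise_append]
          refine ⟨pwL, pwR, ?_⟩
          intro a ha b hb
          obtain ⟨-, hsa⟩ := memL a ha
          obtain ⟨-, hsb⟩ := memR b hb
          apply dot_zero_disj
          intro k hk
          by_contra hbk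
          exact absurd (right_supp (hsb k hbk)) (not_lt.mpr (le_of_lt (left_supp (hsa k hk))))
    · -- left only
      have hlab : labels (build n (f+1) u)
          = u :: labels (build n f (leftChild u)) := by
        simp only [build, if_pos hL, if_neg hR, labels]
      obtain ⟨memL, pwL⟩ := ih (leftChild u) (good_left hL)
      constructor
      · intro v hv
        rw [hlab] at hv
        simp only [List.mem_cons] at hv
        rcases hv with rfl | hv
        · exact ⟨hu, fun i h => h⟩
        · obtain ⟨Gv, hs⟩ := memL v hv
          exact ⟨Gv, fun i h => (left_supp (hs i h)).ne'⟩
      · rw [hlab, List.pairwise_cons]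
        refine ⟨?_, pwL⟩
        intro v hv
        obtain ⟨Gv, hs⟩ := memL v hv
        exact dot_zero_const u v
          (fun i j hi hj => hu.pos i j (left_supp (hs i hi)) (left_supp (hs j hj))) Gv.sum
    · -- right only
      have hlab : labels (build n (f+1) u)
          = u :: labels (build n f (rightChild u)) := by
        simp only [build, if_neg hL, if_pos hR, labels]
      obtain ⟨memR, pwR⟩ := ih (rightChild u) (good_right hR)
      constructor
      · intro v hv
        rw [hlab] at hv
        simp only [List.mem_cons] at hv
        rcases hv with rfl | hv
        · exact ⟨hu, fun i h => h⟩
        · obtain ⟨Gv, hs⟩ := memR v hv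
          exact ⟨Gv, fun i h => (right_supp (hs i h)).ne⟩
      · rw [hlab, List.pairwise_cons]
        refine ⟨?_, pwR⟩
        intro v hv
        obtain ⟨Gv, hs⟩ := memR v hv
        exact dot_zero_const u v
          (fun i j hi hj => hu.neg i j (right_supp (hs i hi)) (right_supp (hs j hj))) Gv.sum
    · -- no children
      have hlab : labels (build n (f+1) u) = [u] := by
        simp only [build, if_neg hL, if_neg hR, labels]
      constructor
      · intro v hv
        rw [hlab, List.mem_singleton] at hv
        subst hv
        exact ⟨hu, fun i h => h⟩
      · rw [hlab]
        simp

lemma good_root (hn : 2 ≤ n) : Good (fun i : Fin n => w n i) := by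
  obtain ⟨h0, hnz, hpos, hneg, hsum⟩ := wkey n hn
  refine ⟨?_, ?_, ?_, ?_⟩
  · intro hcon
    have := congrFun hcon ⟨0, by omega⟩
    simp only [Pi.zero_apply] at this
    exact absurd this (by omega)
  · intro i j hi hj
    exact hpos i j i.isLt j.isLt hi hj
  · intro i j hi hj
    exact hneg i j i.isLt j.isLt hi hj
  · rw [Fin.sum_univ_eq_sum_range (fun i => w n i) n]
    exact hsum

end Main

/-- The vertex labels `u^1, …, u^{n-1}` of `T_n` (in depth-first order) form an
orthogonal set of nonzero vectors: distinct indices give dot product zero. -/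
theorem stmt11 (n : ℕ) (hn : 2 ≤ n) :
    (∀ u ∈ labels (T n), u ≠ 0) ∧
    ∀ (i j : Fin (labels (T n)).length), i ≠ j →
      ∑ k : Fin n, ((labels (T n)).get i) k * ((labels (T n)).get j) k = 0 := by
  obtain ⟨hmem, hpw⟩ := build_good n n (fun i : Fin n => w n i) (good_root hn)
  have hT : T n = build n n (fun i : Fin n => w n i) := rfl
  rw [hT]
  constructor
  · intro u hu
    exact (hmem u hu).1.ne
  · intro i j hij
    have hget := List.pairwise_iff_get.mp hpw
    rcases lt_trichotomy i j with h | h | h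
    · exact hget i j h
    · exact absurd h hij
    · have h2 := hget j i h
      calc ∑ k : Fin n, (labels (build n n fun i : Fin n => w n i)).get i k
              * (labels (build n n fun i : Fin n => w n i)).get j k
          = ∑ k : Fin n, (labels (build n n fun i : Fin n => w n i)).get j k
              * (labels (build n n fun i : Fin n => w n i)).get i k :=
            Finset.sum_congr rfl (fun k _ => mul_comm _ _)
        _ = 0 := h2
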